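/- If T is a labeled monomial tree with excess Δ(T) = 0, then T contains no bad pairs: for every pair consisting of a T₁ edge (v₁,u₁) and its matching T₂ edge (v₂,u₂), the vertices v₁ and v₂ lie in the same generation and the vertices u₁ and u₂ lie in the same generation. -/
import Mathlib


/-- A labeled monomial tree over labels `{1,…,N}` (encoded as `Fin N`): a finite rooted
tree of depth `t` whose vertices lie in levels `0,…,t` (root at level `t`, all leaves at
level `0`), each vertex carrying a label, subject to the non-backtracking condition and
the condition that every edge-label pair occurs on at least two edges. -/
structure LabeledMonomialTree (N : ℕ) where
  depth : ℕ
  V : Type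
  [instFintype : Fintype V]
  [instDecEq : DecidableEq V]
  root : V
  parent : V → V
  level : V → ℕ
  label : V → Fin N
  parent_root : parent root = root
  level_root : level root = depth
  level_le : ∀ v, level v ≤ depth
  level_parent : ∀ v, v ≠ root → level (parent v) = level v + 1
  leaves_at_zero : ∀ v, 1 ≤ level v → ∃ w, w ≠ root ∧ parent w = v
  nonbacktracking : ∀ w, w ≠ root → parent w ≠ root →
    label (parent (parent w)) ≠ label w
  edges_doubled : ∀ v, v ≠ root → ∃ w, w ≠ root ∧ w ≠ v ∧
    s(label w, label (parent w)) = s(label v, label (parent v))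

attribute [instance] LabeledMonomialTree.instFintype LabeledMonomialTree.instDecEq

namespace LabeledMonomialTree

variable {N : ℕ}

/-- The number of edges of `T` (each non-root vertex contributes the edge to its
parent). -/
def numEdges (T : LabeledMonomialTree N) : ℕ := Fintype.card {v : T.V // v ≠ T.root}

/-- The number of distinct vertex labels of `T`. -/
def numLabels (T : LabeledMonomialTree N) : ℕ := (Finset.univ.image T.label).card

/-- The excess `Δ(T) = |E(T)|/2 - |V(T)| + 1`, where `|V(T)|` is the number of distinct
vertex labels. -/
def excess (T : LabeledMonomialTree N) : ℚ :=
  (T.numEdges : ℚ) / 2 - (T.numLabels : ℚ) + 1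

/-- The unordered pair of endpoint labels of the edge from `v` to its parent. -/
def edgeSym (T : LabeledMonomialTree N) (v : T.V) : Sym2 (Fin N) :=
  s(T.label v, T.label (T.parent v))

/-- The number of vertices of `T` carrying the label `i`. -/
noncomputable def mult (T : LabeledMonomialTree N) (i : Fin N) : ℕ :=
  Set.ncard {v : T.V | T.label v = i}

end LabeledMonomialTree
namespace LabeledMonomialTree

variable {N : ℕ}

/-- A standard ordering of the edges of `T` (edges being identified with their child
vertices): an injective enumeration which lists edges generation by generation from the
leaves up to the root (edges with child at a lower level come first), and within a
generation orders edges consistently with the order of their parent edges. -/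
structure StdOrder (T : LabeledMonomialTree N) where
  ord : T.V → ℕ
  inj : Function.Injective ord
  level_mono : ∀ v w, v ≠ T.root → w ≠ T.root → T.level v < T.level w → ord v < ord w
  parent_mono : ∀ v w, v ≠ T.root → w ≠ T.root → T.level v = T.level w →
    ord v < ord w → ord (T.parent v) ≤ ord (T.parent w)

/-- A `T₁` edge: the first edge, in the standard ordering, whose child label is the
given one (the child label has not appeared previously). -/
def IsT1 (T : LabeledMonomialTree N) (O : StdOrder T) (v : T.V) : Prop :=
  v ≠ T.root ∧ ∀ w, w ≠ T.root → O.ord w < O.ord v → T.label w ≠ T.label v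

/-- A `T₂` edge: the second occurrence of an edge with a given pair of endpoint labels,
whose first occurrence was a `T₁` edge. -/
def IsT2 (T : LabeledMonomialTree N) (O : StdOrder T) (v : T.V) : Prop :=
  v ≠ T.root ∧ ∃ w, w ≠ T.root ∧ O.ord w < O.ord v ∧ T.edgeSym w = T.edgeSym v ∧
    T.IsT1 O w ∧
    ∀ u, u ≠ T.root → T.edgeSym u = T.edgeSym v → O.ord u < O.ord v → u = w

/-- A `T₃` edge: any edge which is neither `T₁` nor `T₂`. -/
def IsT3 (T : LabeledMonomialTree N) (O : StdOrder T) (v : T.V) : Prop :=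
  v ≠ T.root ∧ ¬ T.IsT1 O v ∧ ¬ T.IsT2 O v

end LabeledMonomialTree

/-- **No bad pairs when the excess vanishes.** Let `T` be a labeled monomial tree with
`Δ(T) = 0`.  Then every pair consisting of a `T₁` edge `(v₁,u₁)` and its matching `T₂`
edge `(v₂,u₂)` (edges identified with their child vertices `u₁, u₂`, with the same pair
of endpoint labels, the `T₁` edge occurring first) is a good pair: `u₁` and `u₂` lie in
the same generation, and the parents `v₁` and `v₂` lie in the same generation. -/
theorem no_bad_pairs_of_excess_eq_zero {N : ℕ} (T : LabeledMonomialTree N)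
    (O : T.StdOrder) (hΔ : T.excess = 0)
    (u₁ u₂ : T.V) (h1 : T.IsT1 O u₁) (h2 : T.IsT2 O u₂)
    (hlabel : T.label u₁ = T.label u₂ ∧ T.label (T.parent u₁) = T.label (T.parent u₂))
    (horder : O.ord u₁ < O.ord u₂) :
    T.level u₁ = T.level u₂ ∧ T.level (T.parent u₁) = T.level (T.parent u₂) := by
  classical
  set n := T.numLabels with hn
  set m := T.numEdges with hm
  set r₀ := T.label T.root with hr₀
  set L := (Finset.univ.image T.label) with hL
  have hr₀L : r₀ ∈ L := Finset.mem_image_of_mem _ (Finset.mem_univ _)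
  have hn1 : 1 ≤ n := Finset.card_pos.2 ⟨r₀, hr₀L⟩
  -- Step A: counting from the excess hypothesis
  have hmn : m + 2 = 2 * n := by
    have h : (m : ℚ) / 2 - (n : ℚ) + 1 = 0 := hΔ
    have h2 : (m : ℚ) + 2 = 2 * (n : ℚ) := by linarith
    exact_mod_cast h2
  -- The set of distinct edge label-pairs
  set S := (Finset.univ.filter (fun v => v ≠ T.root)) with hS
  set E := S.image T.edgeSym with hE
  have hmcard : m = S.card := Fintype.card_subtype _
  -- Step B: each fiber has at least two elements
  have hEcard : 2 * E.card ≤ m := by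
    have hsum := Finset.card_eq_sum_card_image T.edgeSym S
    have h2 : ∀ e ∈ E, 2 ≤ (S.filter (fun v => T.edgeSym v = e)).card := by
      intro e he
      obtain ⟨v, hv, hve⟩ := Finset.mem_image.1 he
      have hvroot : v ≠ T.root := (Finset.mem_filter.1 hv).2
      obtain ⟨w, hwroot, hwv, hsym⟩ := T.edges_doubled v hvroot
      have hwe : T.edgeSym w = e := by
        rw [← hve]; exact hsym
      have hvmem : v ∈ S.filter (fun v => T.edgeSym v = e) :=
        Finset.mem_filter.2 ⟨hv, hve⟩
      have hwmem : w ∈ S.filter (fun v => T.edgeSym v = e) :=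
        Finset.mem_filter.2 ⟨Finset.mem_filter.2 ⟨Finset.mem_univ _, hwroot⟩, hwe⟩
      exact Finset.one_lt_card.2 ⟨v, hvmem, w, hwmem, fun h => hwv h.symm⟩
    have h3 : E.card • 2 ≤ ∑ e ∈ E, (S.filter (fun v => T.edgeSym v = e)).card :=
      Finset.card_nsmul_le_sum E _ 2 h2
    rw [smul_eq_mul, mul_comm] at h3
    rw [← hE] at hsum
    omega
  -- Step C: maximal-level occurrence of each label
  have hex : ∀ l : Fin N, ∃ v : T.V,
      l ∈ L → (T.label v = l ∧ ∀ w, T.label w = l → T.level w ≤ T.level v) := by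
    intro l
    by_cases hl : l ∈ L
    · obtain ⟨v₀, _, hv₀⟩ := Finset.mem_image.1 hl
      obtain ⟨v, hv, hmax⟩ := Finset.exists_max_image
        (Finset.univ.filter (fun v => T.label v = l)) T.level
        ⟨v₀, Finset.mem_filter.2 ⟨Finset.mem_univ _, hv₀⟩⟩
      exact ⟨v, fun _ => ⟨(Finset.mem_filter.1 hv).2,
        fun w hw => hmax w (Finset.mem_filter.2 ⟨Finset.mem_univ _, hw⟩)⟩⟩
    · exact ⟨T.root, fun h => absurd h hl⟩
  choose vm hvm using hex
  have hlab : ∀ l ∈ L, T.label (vm l) = l := fun l hl => (hvm l hl).1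
  have hmax : ∀ l ∈ L, ∀ w, T.label w = l → T.level w ≤ T.level (vm l) :=
    fun l hl => (hvm l hl).2
  have hvmroot : ∀ l ∈ L, l ≠ r₀ → vm l ≠ T.root := by
    intro l hl hlr hcon
    exact hlr (by rw [← hlab l hl, hcon])
  have hpl : ∀ l ∈ L, l ≠ r₀ → T.label (T.parent (vm l)) ≠ l := by
    intro l hl hlr hcon
    have h1 := hmax l hl _ hcon
    have h2 := T.level_parent (vm l) (hvmroot l hl hlr)
    omega
  set p : Fin N → Fin N := fun l => T.label (T.parent (vm l)) with hp
  have hedge : ∀ l ∈ L, T.edgeSym (vm l) = s(l, p l) := by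
    intro l hl
    show s(T.label (vm l), T.label (T.parent (vm l))) = _
    rw [hlab l hl]
  -- the injection l ↦ edgeSym (vm l)
  have hmaps : ∀ l ∈ L.erase r₀, T.edgeSym (vm l) ∈ E.filter (fun e => ¬ e.IsDiag) := by
    intro l hl
    obtain ⟨hlr, hlL⟩ := Finset.mem_erase.1 hl
    refine Finset.mem_filter.2 ⟨Finset.mem_image_of_mem _
      (Finset.mem_filter.2 ⟨Finset.mem_univ _, hvmroot l hlL hlr⟩), ?_⟩
    rw [hedge l hlL, Sym2.mk_isDiag_iff]
    exact fun h => hpl l hlL hlr h.symm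
  have hinj : ∀ a ∈ L.erase r₀, ∀ b ∈ L.erase r₀,
      T.edgeSym (vm a) = T.edgeSym (vm b) → a = b := by
    intro a ha b hb hab
    obtain ⟨har, haL⟩ := Finset.mem_erase.1 ha
    obtain ⟨hbr, hbL⟩ := Finset.mem_erase.1 hb
    rw [hedge a haL, hedge b hbL] at hab
    rcases Sym2.eq_iff.1 hab with ⟨h1, _⟩ | ⟨h1, h2⟩
    · exact h1
    · -- a = p b and p a = b : contradiction by level maximality
      exfalso
      have ha1 : T.level (T.parent (vm b)) ≤ T.level (vm a) :=
        hmax a haL _ h1.symm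
      have hb1 : T.level (T.parent (vm a)) ≤ T.level (vm b) :=
        hmax b hbL _ h2
      have ha2 := T.level_parent (vm a) (hvmroot a haL har)
      have hb2 := T.level_parent (vm b) (hvmroot b hbL hbr)
      omega
  have hcard1 : n - 1 ≤ (E.filter (fun e => ¬ e.IsDiag)).card := by
    have h := Finset.card_le_card_of_injOn (fun l => T.edgeSym (vm l)) hmaps
      (fun a ha b hb hab => hinj a ha b hb hab)
    rwa [Finset.card_erase_of_mem hr₀L] at h
  have hcard2 : (E.filter (fun e => ¬ e.IsDiag)).card ≤ E.card := Finset.card_filter_le _ _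
  have hEn : E.card = n - 1 := by omega
  -- surjectivity: every edge pair is of the form s(l, p l)
  have hsurj : ∀ e ∈ E, ∃ l, ∃ _ : l ∈ L.erase r₀, e = T.edgeSym (vm l) := by
    refine Finset.surj_on_of_inj_on_of_card_le (fun l _ => T.edgeSym (vm l))
      (fun a ha => Finset.mem_filter.1 (hmaps a ha) |>.1)
      (fun a b ha hb hab => hinj a ha b hb hab) ?_
    rw [Finset.card_erase_of_mem hr₀L, hEn]
    exact Nat.le_refl _
  -- K2 : classification of edges
  have hK2 : ∀ v, v ≠ T.root → ∃ l, l ≠ r₀ ∧ l ∈ L ∧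
      s(T.label v, T.label (T.parent v)) = s(l, p l) := by
    intro v hv
    have hvE : T.edgeSym v ∈ E :=
      Finset.mem_image_of_mem _ (Finset.mem_filter.2 ⟨Finset.mem_univ _, hv⟩)
    obtain ⟨l, hl, hleq⟩ := hsurj _ hvE
    obtain ⟨hlr, hlL⟩ := Finset.mem_erase.1 hl
    refine ⟨l, hlr, hlL, ?_⟩
    have : T.edgeSym v = s(l, p l) := by rw [hleq, hedge l hlL]
    exact this
  -- C' : every edge goes up in the label tree
  have hC : ∀ k, ∀ v, T.depth - T.level v ≤ k → v ≠ T.root →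
      T.label v ≠ r₀ ∧ T.label (T.parent v) = p (T.label v) := by
    intro k
    induction k with
    | zero =>
      intro v hk hv
      exfalso
      have h1 := T.level_parent v hv
      have h2 := T.level_le (T.parent v)
      omega
    | succ k ih =>
      intro v hk hv
      obtain ⟨l, hlr, hlL, hsym⟩ := hK2 v hv
      rcases Sym2.eq_iff.1 hsym with ⟨h1, h2⟩ | ⟨h1, h2⟩
      · exact ⟨h1 ▸ hlr, by rw [h1, h2]⟩
      · exfalso
        by_cases hu : T.parent v = T.root
        · exact hlr (by rw [← h2, hu])
        · have hpar := T.level_parent v hv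
          have hlev : T.depth - T.level (T.parent v) ≤ k := by omega
          obtain ⟨_, hgp⟩ := ih (T.parent v) hlev hu
          have hnb := T.nonbacktracking v hv hu
          rw [hgp, h2] at hnb
          exact hnb h1.symm
  have hRootLab : ∀ w, w ≠ T.root → T.label w ≠ r₀ :=
    fun w hw => (hC T.depth w (Nat.sub_le _ _) hw).1
  -- labels determine levels
  have hLev : ∀ k, ∀ v w : T.V, T.depth - T.level v ≤ k →
      T.label v = T.label w → T.level v = T.level w := by
    intro k
    induction k with
    | zero =>
      intro v w hk hlw
      have hv : v = T.root := by
        by_contra h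
        have h1 := T.level_parent v h
        have h2 := T.level_le (T.parent v)
        omega
      subst hv
      by_cases hw : w = T.root
      · rw [hw]
      · exact absurd hlw.symm (hRootLab w hw)
    | succ k ih =>
      intro v w hk hlw
      by_cases hv : v = T.root
      · subst hv
        by_cases hw : w = T.root
        · rw [hw]
        · exact absurd hlw.symm (hRootLab w hw)
      · have hvr : T.label v ≠ r₀ := (hC (k+1) v hk hv).1
        have hw : w ≠ T.root := by
          intro h
          exact hvr (by rw [hlw, h])
        have h1 := (hC (k+1) v hk hv).2
        have h2 := (hC T.depth w (Nat.sub_le _ _) hw).2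
        have hpp : T.label (T.parent v) = T.label (T.parent w) := by
          rw [h1, h2, hlw]
        have hlpv := T.level_parent v hv
        have hlpw := T.level_parent w hw
        have hih := ih (T.parent v) (T.parent w) (by omega) hpp
        omega
  have e1 : T.level u₁ = T.level u₂ := hLev T.depth u₁ u₂ (Nat.sub_le _ _) hlabel.1
  refine ⟨e1, ?_⟩
  rw [T.level_parent u₁ h1.1, T.level_parent u₂ h2.1, e1]
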